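/- Section property: Let i ∈ 𝕊², let (k,l) ∈ T, and let f ∈ A_i(𝔹⁴). Then P_{𝔹⁴}(S_{k,l}[f]) = f; explicitly, P_{k,l}[ D₁[f,k,l] + D₂[f,k,l] k + D₃[f,k,l] l + D₄[f,k,l] kl ] = f as functions on 𝔹⁴. Hence S_{k,l} is a section of the projection P_{𝔹⁴} : HL(D) → A_i(𝔹⁴). -/

import Mathlib

noncomputable section

open MeasureTheory Filter

notation "ℍ" => Quaternion ℝ

/-- The set of pure imaginary unit quaternions `𝕊²`. -/
def Sph2 (i : ℍ) : Prop := i.re = 0 ∧ ‖i‖ = 1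

/-- Ordered pairs of orthogonal pure imaginary unit quaternions (the set `T`). -/
def OrthPair (i j : ℍ) : Prop := Sph2 i ∧ Sph2 j ∧ (i * star j).re = 0

/-- The slice complex plane `ℂ(i) = {x + y i}`. -/
def CC (i : ℍ) : Set ℍ := {q | ∃ x y : ℝ, q = (x : ℍ) + y • i}

/-- Slice regularity of `f` on `Ω`: real differentiability together with the
Cauchy–Riemann condition `½(∂/∂x + i ∂/∂y) f = 0` on every slice. -/
def SliceRegularOn (f : ℍ → ℍ) (Ω : Set ℍ) : Prop :=
  ∀ ⦃i : ℍ⦄, Sph2 i → ∀ x y : ℝ, ((x : ℍ) + y • i) ∈ Ω →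
    DifferentiableAt ℝ f ((x : ℍ) + y • i) ∧
    fderiv ℝ f ((x : ℍ) + y • i) 1 + i * fderiv ℝ f ((x : ℍ) + y • i) i = 0

/-- Axially symmetric slice domain. -/
structure AxSymSDomain (Ω : Set ℍ) : Prop where
  isOpen : IsOpen Ω
  isConnected : IsConnected Ω
  real_nonempty : (Ω ∩ Set.range ((↑) : ℝ → ℍ)).Nonempty
  slice_connected : ∀ ⦃i : ℍ⦄, Sph2 i →
    IsConnected {p : ℝ × ℝ | ((p.1 : ℍ) + p.2 • i) ∈ Ω}
  axial : ∀ (x y : ℝ) ⦃i : ℍ⦄, Sph2 i → ((x : ℍ) + y • i) ∈ Ω →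
    ∀ ⦃j : ℍ⦄, Sph2 j → ((x : ℍ) + y • j) ∈ Ω

/-- The slice `Ω ∩ ℂ(i)` as a subset of `ℝ²`. -/
def sliceSet (Ω : Set ℍ) (i : ℍ) : Set (ℝ × ℝ) := {p | ((p.1 : ℍ) + p.2 • i) ∈ Ω}

/-- `‖f‖²_{A_i(Ω)} = ∫_{Ω ∩ ℂ(i)} ‖f‖² dσ_i`. -/
def bergmanNormSq (Ω : Set ℍ) (i : ℍ) (f : ℍ → ℍ) : ℝ :=
  ∫ p in sliceSet Ω i, ‖f ((p.1 : ℍ) + p.2 • i)‖ ^ 2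

/-- The slice regular Bergman norm `‖f‖_{A_i(Ω)}`. -/
def bergmanNorm (Ω : Set ℍ) (i : ℍ) (f : ℍ → ℍ) : ℝ :=
  Real.sqrt (bergmanNormSq Ω i f)

/-- Membership in the slice regular Bergman space `A_i(Ω)`. -/
def MemBergman (Ω : Set ℍ) (i : ℍ) (f : ℍ → ℍ) : Prop :=
  SliceRegularOn f Ω ∧
  IntegrableOn (fun p : ℝ × ℝ => ‖f ((p.1 : ℍ) + p.2 • i)‖ ^ 2) (sliceSet Ω i)

/-- The quaternionic Bergman inner product `⟨f,g⟩ = ∫ conj(f) g dσ_i`. -/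
def bergmanInner (Ω : Set ℍ) (i : ℍ) (f g : ℍ → ℍ) : ℍ :=
  ∫ p in sliceSet Ω i, star (f ((p.1 : ℍ) + p.2 • i)) * g ((p.1 : ℍ) + p.2 • i)

/-- The open unit ball `𝔹⁴ ⊆ ℍ`. -/
def B4 : Set ℍ := {q | ‖q‖ < 1}

/-- The open unit disk `D ⊆ ℝ²`. -/
def unitDisk : Set (ℝ × ℝ) := {p | p.1 ^ 2 + p.2 ^ 2 < 1}

/-- `‖f‖²_{A_i(𝔹⁴)} = ∫_D ‖f(x + yi)‖² dμ(x,y)`. -/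
def bergNormSqB (i : ℍ) (f : ℍ → ℍ) : ℝ :=
  ∫ p in unitDisk, ‖f ((p.1 : ℍ) + p.2 • i)‖ ^ 2

/-- The Bergman norm on `A_i(𝔹⁴)`. -/
def bergNormB (i : ℍ) (f : ℍ → ℍ) : ℝ := Real.sqrt (bergNormSqB i f)

/-- Membership in `A_i(𝔹⁴)`. -/
def MemBergB (i : ℍ) (f : ℍ → ℍ) : Prop :=
  SliceRegularOn f B4 ∧
  IntegrableOn (fun p : ℝ × ℝ => ‖f ((p.1 : ℍ) + p.2 • i)‖ ^ 2) unitDisk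

open Classical in
/-- `I_q`: the imaginary unit direction of `q` (an arbitrary fixed unit when `q` is real). -/
def Imu (q : ℍ) : ℍ := if q.im = 0 then ⟨0, 1, 0, 0⟩ else ‖q.im‖⁻¹ • q.im

/-- The extension operator `P_{k,·}`: for a slice function `g : ℝ² → ℍ` (representing
`x + y k ↦ g(x,y)`), `Pext k g (q) = ½[(1 + I_q k) g(x, −y) + (1 − I_q k) g(x, y)]`
where `q = x + I_q y`, `y = ‖im q‖ ≥ 0`. -/
def Pext (k : ℍ) (g : ℝ × ℝ → ℍ) (q : ℍ) : ℍ :=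
  (2⁻¹ : ℝ) • ((1 + Imu q * k) * g (q.re, -‖q.im‖) + (1 - Imu q * k) * g (q.re, ‖q.im‖))

/-- The slice function `x + y k ↦ a + b k + c l + d kl`. -/
def sliceFun (a b c d : ℝ × ℝ → ℝ) (k l : ℍ) (p : ℝ × ℝ) : ℍ :=
  (a p : ℍ) + b p • k + c p • l + d p • (k * l)

/-- `L²(D)` norm of a real function on the unit disk. -/
def L2D (a : ℝ × ℝ → ℝ) : ℝ := Real.sqrt (∫ p in unitDisk, a p ^ 2)

/-- Finiteness of the `L²(D)` norm. -/
def MemL2D (a : ℝ × ℝ → ℝ) : Prop := IntegrableOn (fun p => a p ^ 2) unitDisk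

/-- Harmonicity on the unit disk: `a` is `C²` and `∂²a/∂x² + ∂²a/∂y² = 0`. -/
def HarmonicOnDisk (a : ℝ × ℝ → ℝ) : Prop :=
  ContDiffOn ℝ 2 a unitDisk ∧ ∀ p ∈ unitDisk,
    fderiv ℝ (fun q => fderiv ℝ a q (1, 0)) p (1, 0)
      + fderiv ℝ (fun q => fderiv ℝ a q (0, 1)) p (0, 1) = 0

/-- `(a,b)` is a pair of conjugate harmonic functions on `D`:
both harmonic and satisfying the Cauchy–Riemann equations. -/
def ConjHarmPair (a b : ℝ × ℝ → ℝ) : Prop :=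
  HarmonicOnDisk a ∧ HarmonicOnDisk b ∧
  ∀ p ∈ unitDisk,
    fderiv ℝ a p (1, 0) = fderiv ℝ b p (0, 1) ∧
    fderiv ℝ a p (0, 1) = -fderiv ℝ b p (1, 0)

/-- `(a,b) ∈ HL²(D)`. -/
def HLpair (a b : ℝ × ℝ → ℝ) : Prop := ConjHarmPair a b ∧ MemL2D a ∧ MemL2D b

/-- Raw data of an element of `HL(D)`: a 2×2 matrix `(a b; c d)` of real functions
on the disk together with a pair `(k,l)` of quaternions. -/
structure HLElem where
  a : ℝ × ℝ → ℝ
  b : ℝ × ℝ → ℝ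
  c : ℝ × ℝ → ℝ
  d : ℝ × ℝ → ℝ
  k : ℍ
  l : ℍ

/-- Membership in `HL(D)`: `(a,b),(c,d) ∈ HL²(D)` and `(k,l) ∈ T`. -/
def HLElem.mem (A : HLElem) : Prop := HLpair A.a A.b ∧ HLpair A.c A.d ∧ OrthPair A.k A.l

/-- The bundle projection `P_{𝔹⁴}((a b; c d),(k,l)) = P_{k,l}[a + bk + cl + dkl]`. -/
def HLElem.proj (A : HLElem) : ℍ → ℍ := Pext A.k (sliceFun A.a A.b A.c A.d A.k A.l)

/-- The metric of `HL(D)`. -/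
def HLdist (A B : HLElem) : ℝ :=
  L2D (A.a - B.a) + L2D (A.b - B.b) + L2D (A.c - B.c) + L2D (A.d - B.d)
    + Real.sqrt (‖A.k - B.k‖ ^ 2 + ‖A.l - B.l‖ ^ 2)

/-- `Q_{k,l}[f] : (x,y) ↦ f(x + y k)`, the restriction of `f` to the slice `ℂ(k)`. -/
def Qsl (f : ℍ → ℍ) (k : ℍ) (p : ℝ × ℝ) : ℍ := f ((p.1 : ℍ) + p.2 • k)

/-- `D₁[f,k,l] = (Q[f] + conj(Q[f]))/2 = Re (Q[f])`. -/
def Dc1 (f : ℍ → ℍ) (k _l : ℍ) (p : ℝ × ℝ) : ℝ := (Qsl f k p).re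

/-- `D₂[f,k,l] = −(Q[f]·k + conj(Q[f]·k))/2 = −Re (Q[f]·k)`. -/
def Dc2 (f : ℍ → ℍ) (k _l : ℍ) (p : ℝ × ℝ) : ℝ := -(Qsl f k p * k).re

/-- `D₃[f,k,l] = −(Q[f]·l + conj(Q[f]·l))/2 = −Re (Q[f]·l)`. -/
def Dc3 (f : ℍ → ℍ) (k l : ℍ) (p : ℝ × ℝ) : ℝ := -(Qsl f k p * l).re

/-- `D₄[f,k,l] = (Q[f]·lk + conj(Q[f]·lk))/2 = Re (Q[f]·(lk))`. -/
def Dc4 (f : ℍ → ℍ) (k l : ℍ) (p : ℝ × ℝ) : ℝ := (Qsl f k p * (l * k)).re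

/-- The section map `S_{k,l}[f] = ((D₁ D₂; D₃ D₄), (k,l))`. -/
def Smap (f : ℍ → ℍ) (k l : ℍ) : HLElem :=
  ⟨Dc1 f k l, Dc2 f k l, Dc3 f k l, Dc4 f k l, k, l⟩

/-- The metric `ρ_i` on `A_i(𝔹⁴) × T`. -/
def rhoA (i : ℍ) (f : ℍ → ℍ) (k l : ℍ) (g : ℍ → ℍ) (m n : ℍ) : ℝ :=
  bergNormB i (f - g) + Real.sqrt (‖k - m‖ ^ 2 + ‖l - n‖ ^ 2)

lemma sph2_sq {u : ℍ} (h : Sph2 u) : u.imI^2 + u.imJ^2 + u.imK^2 = 1 := by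
  obtain ⟨h0, h1⟩ := h
  have h3 := Quaternion.normSq_eq_norm_mul_self u
  rw [h1] at h3
  rw [Quaternion.normSq_def'] at h3
  simp only [sq]; nlinarith [h3]

lemma sph2_mul_self {J : ℍ} (h : Sph2 J) : J * J = -1 := by
  have h1 := sph2_sq h
  obtain ⟨h0, -⟩ := h
  ext <;> simp only [Quaternion.re_mul, Quaternion.imI_mul, Quaternion.imJ_mul,
    Quaternion.imK_mul, Quaternion.re_neg, Quaternion.imI_neg, Quaternion.imJ_neg,
    Quaternion.imK_neg, Quaternion.re_one, Quaternion.imI_one, Quaternion.imJ_one,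
    Quaternion.imK_one, h0] <;> linarith [h1]

/-- Norm of a slice point. -/
lemma norm_slice_sq {u : ℍ} (h : Sph2 u) (x y : ℝ) :
    ‖(x : ℍ) + y • u‖^2 = x^2 + y^2 := by
  have h1 := sph2_sq h
  obtain ⟨h0, -⟩ := h
  rw [sq, ← Quaternion.normSq_eq_norm_mul_self, Quaternion.normSq_def']
  simp only [Quaternion.re_add, Quaternion.imI_add, Quaternion.imJ_add, Quaternion.imK_add,
    Quaternion.re_smul, Quaternion.imI_smul, Quaternion.imJ_smul, Quaternion.imK_smul,
    Quaternion.re_coe, Quaternion.imI_coe, Quaternion.imJ_coe, Quaternion.imK_coe,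
    h0, smul_eq_mul]
  nlinarith [h1]

lemma orth_dot {k l : ℍ} (h : OrthPair k l) :
    k.imI*l.imI + k.imJ*l.imJ + k.imK*l.imK = 0 := by
  obtain ⟨⟨hk0,_⟩, ⟨hl0,_⟩, ho⟩ := h
  simp only [Quaternion.re_mul, Quaternion.re_star, Quaternion.imI_star, Quaternion.imJ_star,
    Quaternion.imK_star, hk0, hl0] at ho
  linarith [ho]

/-- Reconstruction: `w = Re w - Re(wk)k - Re(wl)l + Re(w(lk))(kl)`. -/
lemma recon {k l : ℍ} (h : OrthPair k l) (w : ℍ) :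
    ((w.re : ℝ) : ℍ) + (-(w*k).re) • k + (-(w*l).re) • l + ((w*(l*k)).re) • (k*l) = w := by
  have hO := orth_dot h
  obtain ⟨hks, hls, -⟩ := h
  have hK := sph2_sq hks
  have hL := sph2_sq hls
  obtain ⟨hk0, -⟩ := hks
  obtain ⟨hl0, -⟩ := hls
  set w0 := w.re; set w1 := w.imI; set w2 := w.imJ; set w3 := w.imK
  set k1 := k.imI; set k2 := k.imJ; set k3 := k.imK
  set l1 := l.imI; set l2 := l.imJ; set l3 := l.imK
  ext <;>
    simp only [Quaternion.re_add, Quaternion.imI_add, Quaternion.imJ_add, Quaternion.imK_add,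
      Quaternion.re_smul, Quaternion.imI_smul, Quaternion.imJ_smul, Quaternion.imK_smul,
      Quaternion.re_coe, Quaternion.imI_coe, Quaternion.imJ_coe, Quaternion.imK_coe,
      Quaternion.re_mul, Quaternion.imI_mul, Quaternion.imJ_mul, Quaternion.imK_mul,
      hk0, hl0, smul_eq_mul]
  · linear_combination (w0*l1*l1 + w0*l2*l2 + w0*l3*l3 - w0) * hK + (-w0*k1*k1 - w0*k2*k2 - w0*k3*k3 + w0) * hL + (w0*k1*l1 + w0*k2*l2 + w0*k3*l3 - w1*k2*l3 + w1*k3*l2 + w2*k1*l3 - w2*k3*l1 - w3*k1*l2 + w3*k2*l1) * hO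
  · linear_combination (w1*l2*l2 + w1*l3*l3 - w2*l1*l2 - w3*l1*l3) * hK + (-w1*k1*k1 + w1 - w2*k1*k2 - w3*k1*k3) * hL + (-w0*k2*l3 + w0*k3*l2 + w1*k1*l1 - w1*k2*l2 - w1*k3*l3 + w2*k1*l2 + w2*k2*l1 + w3*k1*l3 + w3*k3*l1) * hO
  · linear_combination (-w1*l1*l2 - w2*l2*l2 + w2 - w3*l2*l3) * hK + (-w1*k1*k2 + w2*k1*k1 + w2*k3*k3 - w3*k2*k3) * hL + (w0*k1*l3 - w0*k3*l1 + w1*k1*l2 + w1*k2*l1 - w2*k1*l1 + w2*k2*l2 - w2*k3*l3 + w3*k2*l3 + w3*k3*l2) * hO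
  · linear_combination (-w1*l1*l3 - w2*l2*l3 - w3*l3*l3 + w3) * hK + (-w1*k1*k3 - w2*k2*k3 + w3*k1*k1 + w3*k2*k2) * hL + (-w0*k1*l2 + w0*k2*l1 + w1*k1*l3 + w1*k3*l1 + w2*k2*l3 + w2*k3*l2 - w3*k1*l1 - w3*k2*l2 + w3*k3*l3) * hO

/-- The embedding `ℂ → ℍ` along a pure unit `J`. -/
def cm (J : ℍ) (z : ℂ) : ℍ := (z.re : ℍ) + z.im • J

lemma cm_mul {J : ℍ} (h : Sph2 J) (z w : ℂ) : cm J (z * w) = cm J z * cm J w := by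
  have h2 := sph2_mul_self h
  simp only [cm, Complex.mul_re, Complex.mul_im]
  simp only [add_mul, mul_add, smul_mul_assoc, mul_smul_comm, smul_smul, h2]
  have hone : ∀ r : ℝ, r • (1:ℍ) = (r : ℍ) := fun r => by
    rw [← Quaternion.coe_one, Quaternion.smul_coe, mul_one]
  simp only [smul_add, smul_neg, smul_smul, Quaternion.coe_mul_eq_smul,
    Quaternion.mul_coe_eq_smul, hone]
  simp only [Quaternion.smul_coe, ← Quaternion.coe_mul]
  rw [show ((↑(z.re * w.re - z.im * w.im)):ℍ) = (z.re * w.re - z.im * w.im) • (1:ℍ) from (hone _).symm,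
     show ((↑(w.re * z.re)):ℍ) = (w.re * z.re) • (1:ℍ) from (hone _).symm,
     show ((↑(w.im * z.im)):ℍ) = (w.im * z.im) • (1:ℍ) from (hone _).symm]
  module

lemma norm_cm {J : ℍ} (h : Sph2 J) (z : ℂ) : ‖cm J z‖ = ‖z‖ := by
  have h1 : ‖cm J z‖^2 = z.re^2 + z.im^2 := norm_slice_sq h _ _
  have h2 : ‖z‖^2 = z.re^2 + z.im^2 := by
    rw [Complex.sq_norm]; simp [Complex.normSq_apply, sq]
  nlinarith [norm_nonneg (cm J z), norm_nonneg z, h1, h2]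

lemma cm_add (J : ℍ) (z w : ℂ) : cm J (z + w) = cm J z + cm J w := by
  simp only [cm, Complex.add_re, Complex.add_im, add_smul]
  push_cast
  abel

lemma cm_real_smul (J : ℍ) (r : ℝ) (z : ℂ) : cm J (r • z) = r • cm J z := by
  simp only [cm, Complex.real_smul, Complex.mul_re, Complex.mul_im, Complex.ofReal_re,
    Complex.ofReal_im, smul_add, Quaternion.smul_coe, smul_smul]
  push_cast
  ring_nf
  simp

/-- Type synonym: `ℍ` viewed as a complex vector space via left multiplication by `J`. -/
def CH (_J : ℍ) : Type := ℍ

/-- Identity map `CH J → ℍ`. -/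
def CH.toH {J : ℍ} (q : CH J) : ℍ := q
/-- Identity map `ℍ → CH J`. -/
def CH.ofH (J : ℍ) (q : ℍ) : CH J := q

@[simp] lemma CH.toH_ofH (J : ℍ) (q : ℍ) : (CH.ofH J q).toH = q := rfl

instance (J : ℍ) : NormedAddCommGroup (CH J) := inferInstanceAs (NormedAddCommGroup ℍ)
instance (J : ℍ) : NormedSpace ℝ (CH J) := inferInstanceAs (NormedSpace ℝ ℍ)
instance (J : ℍ) : CompleteSpace (CH J) := inferInstanceAs (CompleteSpace ℍ)

lemma CH.toH_add {J : ℍ} (q r : CH J) : (q + r).toH = q.toH + r.toH := rfl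
lemma CH.toH_sub {J : ℍ} (q r : CH J) : (q - r).toH = q.toH - r.toH := rfl
lemma CH.toH_real_smul {J : ℍ} (r : ℝ) (q : CH J) : (r • q).toH = r • q.toH := rfl
lemma CH.toH_zero (J : ℍ) : (0 : CH J).toH = 0 := rfl

def cmHom (J : ℍ) [h : Fact (Sph2 J)] : ℂ →+* ℍ where
  toFun := cm J
  map_one' := by simp [cm]
  map_mul' := cm_mul h.out
  map_zero' := by simp [cm]
  map_add' := cm_add J

instance (J : ℍ) [Fact (Sph2 J)] : Module ℂ (CH J) :=
  Module.compHom ℍ (cmHom J)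

lemma ch_smul_def (J : ℍ) [Fact (Sph2 J)] (z : ℂ) (q : CH J) :
    (z • q).toH = cm J z * q.toH := rfl

instance (J : ℍ) [h : Fact (Sph2 J)] : NormedSpace ℂ (CH J) where
  norm_smul_le z q := by
    have : ‖z • q‖ = ‖(z • q).toH‖ := rfl
    rw [this, ch_smul_def, norm_mul, norm_cm h.out]
    exact le_of_eq rfl

instance (J : ℍ) [Fact (Sph2 J)] : IsScalarTower ℝ ℂ (CH J) := by
  constructor
  intro r z q
  have h1 : ((r • z) • q).toH = (r • (z • q)).toH := by
    rw [ch_smul_def, CH.toH_real_smul, ch_smul_def, cm_real_smul, smul_mul_assoc]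
  exact h1

/-- Transfer real differentiability + Cauchy-Riemann to complex differentiability. -/
lemma diffAt_CH {J : ℍ} [hJ : Fact (Sph2 J)] {H : ℂ → CH J} {z : ℂ} (D : ℂ →L[ℝ] CH J)
    (hD : HasFDerivAt H D z) (hCR : (D 1).toH + J * (D Complex.I).toH = 0) :
    DifferentiableAt ℂ H z := by
  have hJ2 : J * J = -1 := sph2_mul_self hJ.out
  set L : ℂ →L[ℂ] CH J := (ContinuousLinearMap.id ℂ ℂ).smulRight (D 1) with hL
  have hDI : (D Complex.I).toH = J * (D 1).toH := by
    have h1 : J * ((D 1).toH + J * (D Complex.I).toH) = 0 := by rw [hCR, mul_zero]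
    rw [mul_add, ← mul_assoc, hJ2, neg_one_mul, add_neg_eq_zero] at h1
    exact h1.symm
  have hLD : ∀ w : ℂ, L w = D w := by
    intro w
    have hw : w = w.re • (1:ℂ) + w.im • Complex.I := by
      simp [Complex.real_smul, Complex.re_add_im]
    have h2 : L w = w • (D 1) := by simp [hL]
    have h3 : (L w).toH = (D w).toH := by
      rw [h2, ch_smul_def]
      conv_rhs => rw [hw]
      rw [map_add, _root_.map_smul, _root_.map_smul, CH.toH_add, CH.toH_real_smul, CH.toH_real_smul,
        hDI, cm, add_mul, Quaternion.coe_mul_eq_smul, smul_mul_assoc]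
    exact h3
  have hfun : (⇑L : ℂ → CH J) = ⇑D := funext hLD
  have hHL : HasFDerivAt H L z := by
    rw [hasFDerivAt_iff_isLittleO_nhds_zero] at hD ⊢
    rw [hfun]
    exact hD
  exact hHL.differentiableAt

lemma complex_norm_sq (z : ℂ) : ‖z‖^2 = z.re^2 + z.im^2 := by
  rw [Complex.sq_norm]; simp [Complex.normSq_apply, sq]

/-- The real-linear slice embedding `ℂ →L[ℝ] ℍ`, `z ↦ z.re + z.im • u`. -/
def Lq (u : ℍ) : ℂ →L[ℝ] ℍ :=
  (Complex.reCLM.smulRight (1:ℍ)) + (Complex.imCLM.smulRight u)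

lemma Lq_apply (u : ℍ) (z : ℂ) : Lq u z = (z.re : ℍ) + z.im • u := by
  simp only [Lq, ContinuousLinearMap.add_apply, ContinuousLinearMap.smulRight_apply,
    Complex.reCLM_apply, Complex.imCLM_apply]
  congr 1
  rw [← Quaternion.coe_one, Quaternion.smul_coe, mul_one]

lemma Lq_one (u : ℍ) : Lq u 1 = 1 := by
  rw [Lq_apply]; simp

lemma Lq_I (u : ℍ) : Lq u Complex.I = u := by
  rw [Lq_apply]; simp

lemma Lq_mem {u : ℍ} (hu : Sph2 u) {z : ℂ} (hz : z ∈ Metric.ball (0:ℂ) 1) :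
    Lq u z ∈ B4 := by
  have h1 := norm_slice_sq hu z.re z.im
  have hz' : ‖z‖ < 1 := by simpa using mem_ball_zero_iff.mp hz
  have h2 := complex_norm_sq z
  show ‖Lq u z‖ < 1
  rw [Lq_apply]
  nlinarith [norm_nonneg ((z.re:ℍ) + z.im • u), norm_nonneg z]

lemma sph2_neg {k : ℍ} (hk : Sph2 k) : Sph2 (-k) :=
  ⟨by simp [hk.1], by simp [hk.2]⟩

/-- Key quaternion algebra identity for the Cauchy-Riemann computation. -/
lemma key_alg (J k A B C : ℍ) (hJ2 : J*J = -1) (hk2 : k*k = -1) :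
    (2⁻¹:ℝ) • ((1+J*k)*A + (1-J*k)*B) - C
      + J * ((2⁻¹:ℝ) • ((1+J*k)*(-(k*A)) + (1-J*k)*(k*B)) - J*C) = 0 := by
  have m0 : J * (J * C) = -C := by rw [← mul_assoc, hJ2, neg_one_mul]
  have m1 : J * ((1+J*k)*(k*A)) = (1+J*k)*A := by
    rw [add_mul, one_mul, add_mul, one_mul, mul_add]
    have : (J*k)*(k*A) = -(J*A) := by
      rw [mul_assoc J k (k*A), ← mul_assoc k k A, hk2, neg_one_mul, mul_neg]
    rw [this, mul_neg, ← mul_assoc J J A, hJ2, neg_one_mul, neg_neg, ← mul_assoc, add_comm]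
  have m2 : J * ((1-J*k)*(k*B)) = -((1-J*k)*B) := by
    rw [sub_mul, one_mul, sub_mul, one_mul, mul_sub]
    have : (J*k)*(k*B) = -(J*B) := by
      rw [mul_assoc J k (k*B), ← mul_assoc k k B, hk2, neg_one_mul, mul_neg]
    rw [this, mul_neg, ← mul_assoc J J B, hJ2, neg_one_mul, neg_neg, ← mul_assoc]
    rw [neg_sub, sub_eq_add_neg]
  rw [mul_sub, mul_smul_comm, mul_add, mul_neg, mul_neg, m1, m2, m0, sub_neg_eq_add]
  rw [smul_add, smul_add, smul_neg]
  module

def mulL (c : ℍ) : ℍ →L[ℝ] ℍ := ContinuousLinearMap.mul ℝ ℍ c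
lemma mulL_apply (c q : ℍ) : mulL c q = c * q := rfl

/-- The representation formula for slice regular functions on `𝔹⁴`. -/
lemma rep_formula {f : ℍ → ℍ} (hf : SliceRegularOn f B4) {k J : ℍ}
    (hk : Sph2 k) (hJ : Sph2 J) {x y : ℝ} (hxy : x^2 + y^2 < 1) :
    f ((x:ℍ) + y • J)
      = (2⁻¹:ℝ) • ((1 + J*k) * f ((x:ℍ) + (-y) • k) + (1 - J*k) * f ((x:ℍ) + y • k)) := by
  haveI : Fact (Sph2 J) := ⟨hJ⟩
  have hk2 := sph2_mul_self hk
  have hJ2 := sph2_mul_self hJ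
  have hnk := sph2_neg hk
  set H : ℂ → CH J := fun z => CH.ofH J
    ((2⁻¹:ℝ) • ((1 + J*k) * f (Lq (-k) z) + (1 - J*k) * f (Lq k z)) - f (Lq J z)) with hHdef
  have key : ∀ z ∈ Metric.ball (0:ℂ) 1, DifferentiableAt ℂ H z := by
    intro z hz
    have eJ : ((z.re : ℍ) + z.im • J) = Lq J z := (Lq_apply J z).symm
    have ep : ((z.re : ℍ) + z.im • k) = Lq k z := (Lq_apply k z).symm
    have em : ((z.re : ℍ) + z.im • (-k)) = Lq (-k) z := (Lq_apply (-k) z).symm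
    obtain ⟨dJ, cJ⟩ := hf hJ z.re z.im (by rw [eJ]; exact Lq_mem hJ hz)
    obtain ⟨dp, cp⟩ := hf hk z.re z.im (by rw [ep]; exact Lq_mem hk hz)
    obtain ⟨dm, cmm⟩ := hf hnk z.re z.im (by rw [em]; exact Lq_mem hnk hz)
    rw [eJ] at dJ cJ
    rw [ep] at dp cp
    rw [em] at dm cmm
    have h1 : HasFDerivAt (fun w => f (Lq (-k) w)) ((fderiv ℝ f (Lq (-k) z)).comp (Lq (-k))) z :=
      dm.hasFDerivAt.comp z (Lq (-k)).hasFDerivAt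
    have h2 : HasFDerivAt (fun w => f (Lq k w)) ((fderiv ℝ f (Lq k z)).comp (Lq k)) z :=
      dp.hasFDerivAt.comp z (Lq k).hasFDerivAt
    have h3 : HasFDerivAt (fun w => f (Lq J w)) ((fderiv ℝ f (Lq J z)).comp (Lq J)) z :=
      dJ.hasFDerivAt.comp z (Lq J).hasFDerivAt
    have h4 : HasFDerivAt (fun w => (1+J*k) * f (Lq (-k) w))
        ((mulL (1+J*k)).comp ((fderiv ℝ f (Lq (-k) z)).comp (Lq (-k)))) z :=
      (mulL (1+J*k)).hasFDerivAt.comp z h1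
    have h5 : HasFDerivAt (fun w => (1-J*k) * f (Lq k w))
        ((mulL (1-J*k)).comp ((fderiv ℝ f (Lq k z)).comp (Lq k))) z :=
      (mulL (1-J*k)).hasFDerivAt.comp z h2
    set D : ℂ →L[ℝ] ℍ :=
      (2⁻¹:ℝ) • ((mulL (1+J*k)).comp ((fderiv ℝ f (Lq (-k) z)).comp (Lq (-k)))
        + (mulL (1-J*k)).comp ((fderiv ℝ f (Lq k z)).comp (Lq k)))
        - (fderiv ℝ f (Lq J z)).comp (Lq J) with hDdef
    have h6 : HasFDerivAt (fun w =>
        (2⁻¹:ℝ) • ((1+J*k) * f (Lq (-k) w) + (1-J*k) * f (Lq k w)) - f (Lq J w)) D z :=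
      ((h4.add h5).const_smul (2⁻¹:ℝ)).sub h3
    have hD1 : D 1 = (2⁻¹:ℝ) • ((1+J*k) * (fderiv ℝ f (Lq (-k) z) 1)
        + (1-J*k) * (fderiv ℝ f (Lq k z) 1)) - fderiv ℝ f (Lq J z) 1 := by
      simp only [hDdef, ContinuousLinearMap.sub_apply, ContinuousLinearMap.smul_apply,
        ContinuousLinearMap.add_apply, ContinuousLinearMap.comp_apply, Lq_one, mulL_apply]
    have hDI : D Complex.I = (2⁻¹:ℝ) • ((1+J*k) * (fderiv ℝ f (Lq (-k) z) (-k))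
        + (1-J*k) * (fderiv ℝ f (Lq k z) k)) - fderiv ℝ f (Lq J z) J := by
      simp only [hDdef, ContinuousLinearMap.sub_apply, ContinuousLinearMap.smul_apply,
        ContinuousLinearMap.add_apply, ContinuousLinearMap.comp_apply, Lq_I, mulL_apply]
    set A := fderiv ℝ f (Lq (-k) z) 1
    set A' := fderiv ℝ f (Lq (-k) z) (-k)
    set B := fderiv ℝ f (Lq k z) 1
    set B' := fderiv ℝ f (Lq k z) k
    set C := fderiv ℝ f (Lq J z) 1
    set C' := fderiv ℝ f (Lq J z) J
    have hA' : A' = -(k*A) := by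
      have h : A = k * A' := by
        rw [neg_mul] at cmm
        rw [← add_neg_eq_zero] at *
        linear_combination (norm := abel) cmm
      rw [h, ← mul_assoc, hk2, neg_one_mul, neg_neg]
    have hB' : B' = k*B := by
      have h : k * B' = -B := by
        rw [← add_neg_eq_zero] at *
        linear_combination (norm := abel) cp
      have := congrArg (fun q => k * q) h
      simp only [← mul_assoc, hk2, neg_one_mul, mul_neg] at this
      rw [← neg_eq_iff_eq_neg] at this
      rw [← this, neg_neg]
    have hC' : C' = J*C := by
      have h : J * C' = -C := by
        rw [← add_neg_eq_zero] at *
        linear_combination (norm := abel) cJ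
      have := congrArg (fun q => J * q) h
      simp only [← mul_assoc, hJ2, neg_one_mul, mul_neg] at this
      rw [← neg_eq_iff_eq_neg] at this
      rw [← this, neg_neg]
    -- transfer
    have D' : ℂ →L[ℝ] CH J := D
    refine diffAt_CH (D := D) ?_ ?_
    · exact h6
    · show D 1 + J * D Complex.I = 0
      rw [hD1, hDI, hA', hB', hC']
      exact key_alg J k A B C hJ2 hk2
  have hana : AnalyticOnNhd ℂ H (Metric.ball (0:ℂ) 1) := by
    apply DifferentiableOn.analyticOnNhd (s := Metric.ball (0:ℂ) 1) _ Metric.isOpen_ball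
    exact fun z hz => (key z hz).differentiableWithinAt
  have hreal : ∀ t : ℝ, H (t : ℂ) = 0 := by
    intro t
    show CH.ofH J _ = 0
    have hLq : ∀ u : ℍ, Lq u (t:ℂ) = (t:ℍ) := by
      intro u; rw [Lq_apply]; simp
    rw [hLq, hLq, hLq]
    show (2⁻¹:ℝ) • ((1 + J*k) * f (t:ℍ) + (1 - J*k) * f (t:ℍ)) - f (t:ℍ) = 0
    have : (1 + J*k) * f (t:ℍ) + (1 - J*k) * f (t:ℍ) = f (t:ℍ) + f (t:ℍ) := by
      rw [add_mul, one_mul, sub_mul, one_mul]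
      abel
    rw [this, ← two_smul ℝ (f (t:ℍ)), smul_smul]
    norm_num
  have hfreq : ∃ᶠ z in nhdsWithin (0:ℂ) {z | z ≠ 0}, H z = 0 := by
    have htend : Filter.Tendsto (fun n : ℕ => ((1/(n+1) : ℝ) : ℂ)) Filter.atTop
        (nhdsWithin (0:ℂ) {z | z ≠ 0}) := by
      apply tendsto_nhdsWithin_of_tendsto_nhds_of_eventually_within
      · have h0 : Filter.Tendsto (fun n : ℕ => (1/(n+1) : ℝ)) Filter.atTop (nhds 0) :=
          tendsto_one_div_add_atTop_nhds_zero_nat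
        have := (Complex.continuous_ofReal.tendsto 0).comp h0
        simpa [Function.comp_def] using this
      · apply Filter.Eventually.of_forall
        intro n
        simp only [Set.mem_setOf_eq, ne_eq, Complex.ofReal_eq_zero]
        positivity
    exact htend.frequently (Filter.Eventually.of_forall (fun n => hreal _)).frequently
  have heq := hana.eqOn_zero_of_preconnected_of_frequently_eq_zero
    (convex_ball (0:ℂ) 1).isPreconnected (Metric.mem_ball_self one_pos) hfreq
  set z0 : ℂ := ⟨x, y⟩ with hz0def
  have hz0re : z0.re = x := rfl
  have hz0im : z0.im = y := rfl
  have hz0 : z0 ∈ Metric.ball (0:ℂ) 1 := by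
    rw [mem_ball_zero_iff]
    have h2 := complex_norm_sq z0
    rw [hz0re, hz0im] at h2
    nlinarith [norm_nonneg z0]
  have hz00 : H z0 = 0 := heq hz0
  have hE : (2⁻¹:ℝ) • ((1 + J*k) * f (Lq (-k) z0) + (1 - J*k) * f (Lq k z0)) - f (Lq J z0) = 0 :=
    hz00
  rw [sub_eq_zero] at hE
  have e1 : Lq J z0 = (x:ℍ) + y • J := by rw [Lq_apply, hz0re, hz0im]
  have e2 : Lq k z0 = (x:ℍ) + y • k := by rw [Lq_apply, hz0re, hz0im]
  have e3 : Lq (-k) z0 = (x:ℍ) + (-y) • k := by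
    rw [Lq_apply, hz0re, hz0im, smul_neg, ← neg_smul]
  rw [e1, e2, e3] at hE
  exact hE.symm

/-- Section property: `P_{𝔹⁴}(S_{k,l}[f]) = f` on `𝔹⁴`, i.e.
`P_{k,l}[D₁ + D₂ k + D₃ l + D₄ kl] = f`. -/
theorem section_property (i k l : ℍ) (hi : Sph2 i) (hkl : OrthPair k l)
    (f : ℍ → ℍ) (hf : MemBergB i f) :
    ∀ q ∈ B4,
      Pext k (sliceFun (Dc1 f k l) (Dc2 f k l) (Dc3 f k l) (Dc4 f k l) k l) q = f q := by
  intro q hq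
  have hsr : SliceRegularOn f B4 := hf.1
  have hk : Sph2 k := hkl.1
  have hg : ∀ p : ℝ × ℝ, sliceFun (Dc1 f k l) (Dc2 f k l) (Dc3 f k l) (Dc4 f k l) k l p
      = f ((p.1:ℍ) + p.2 • k) := by
    intro p
    unfold sliceFun Dc1 Dc2 Dc3 Dc4 Qsl
    exact recon hkl _
  unfold Pext
  rw [hg, hg]
  by_cases h0 : q.im = 0
  · have hq0 : ((q.re : ℝ) : ℍ) = q := by
      have := Quaternion.re_add_im q
      rw [h0, add_zero] at this
      exact this
    have hn0 : ‖q.im‖ = 0 := by rw [h0, norm_zero]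
    simp only [hn0, neg_zero, zero_smul, add_zero, hq0]
    have hmul : (1 + Imu q * k) * f q + (1 - Imu q * k) * f q = f q + f q := by
      rw [add_mul, one_mul, sub_mul, one_mul]
      abel
    rw [hmul, ← two_smul ℝ (f q), smul_smul]
    norm_num
  · have hni : ‖q.im‖ ≠ 0 := by
      rw [norm_ne_zero_iff]; exact h0
    have hJdef : Imu q = ‖q.im‖⁻¹ • q.im := by rw [Imu]; exact if_neg h0
    have hJ : Sph2 (Imu q) := by
      rw [hJdef]
      constructor
      · simp
      · rw [norm_smul, norm_inv, norm_norm, inv_mul_cancel₀ hni]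
    have hq' : ((q.re : ℝ) : ℍ) + ‖q.im‖ • Imu q = q := by
      rw [hJdef, smul_smul, mul_inv_cancel₀ hni, one_smul, Quaternion.re_add_im]
    have hdec : ‖q‖^2 = q.re^2 + ‖q.im‖^2 := by
      have e1 : ‖q‖^2 = Quaternion.normSq q := by
        rw [sq, Quaternion.normSq_eq_norm_mul_self]
      have e2 : ‖q.im‖^2 = Quaternion.normSq q.im := by
        rw [sq, Quaternion.normSq_eq_norm_mul_self]
      rw [e1, e2, Quaternion.normSq_def', Quaternion.normSq_def']
      simp only [Quaternion.re_im, Quaternion.imI_im, Quaternion.imJ_im, Quaternion.imK_im]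
      ring
    have hxy : q.re^2 + ‖q.im‖^2 < 1 := by
      have hq1 : ‖q‖ < 1 := hq
      nlinarith [norm_nonneg q]
    have := rep_formula hsr hk hJ hxy
    rw [hq'] at this
    rw [this]
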